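/- arXiv:1211.6483 — 5 statements merged into one kernel-verified Lean document; each statement's English description precedes it below -/
import Mathlib

section
/- For every face sequence S, the set F(S) is an exposed face of the hypersimplex J(n,k): there exists a linear functional f on ℝⁿ such that F(S) = {x ∈ J(n,k) : f(y) ≤ f(x) for all y ∈ J(n,k)}. -/
set_option linter.unusedVariables false

/-- The alphabet `{0, 1, ∗}` for face sequences. -/
inductive Letter : Type
  | zero
  | one
  | star
  deriving DecidableEq

/-- A sequence of length `n` over the alphabet `{0, 1, ∗}`. -/
abbrev FSeq (n : ℕ) := Fin n → Letter

/-- `S(1)`, the number of `1`'s in `S`. -/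
def count1 {n : ℕ} (S : FSeq n) : ℕ := (Finset.univ.filter fun i => S i = Letter.one).card

/-- The number of `∗`'s in `S`. -/
def countStar {n : ℕ} (S : FSeq n) : ℕ := (Finset.univ.filter fun i => S i = Letter.star).card

/-- A face sequence: either no `∗` and exactly `k` ones, or at most `k-1` ones and
(#ones) + (#stars) ≥ `k+1`. -/
def FaceSeq {n : ℕ} (k : ℕ) (S : FSeq n) : Prop :=
  (countStar S = 0 ∧ count1 S = k) ∨ (count1 S + 1 ≤ k ∧ k + 1 ≤ count1 S + countStar S)

/-- The hypersimplex `J(n,k)`: the convex hull of the 0/1-vectors in `ℝⁿ` summing to `k`. -/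
def hypersimplex (n k : ℕ) : Set (Fin n → ℝ) :=
  convexHull ℝ {x : Fin n → ℝ | (∀ i, x i = 0 ∨ x i = 1) ∧ ∑ i, x i = (k : ℝ)}

/-- `F(S)`: the convex hull of the vertices of `J(n,k)` compatible with `S`. -/
def FaceOf (n k : ℕ) (S : FSeq n) : Set (Fin n → ℝ) :=
  convexHull ℝ {x : Fin n → ℝ | ((∀ i, x i = 0 ∨ x i = 1) ∧ ∑ i, x i = (k : ℝ)) ∧
    (∀ i, S i = Letter.zero → x i = 0) ∧ (∀ i, S i = Letter.one → x i = 1)}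

/-- The coefficient vector of the exposing functional. -/
def sCoeff {n : ℕ} (S : FSeq n) : Fin n → ℝ :=
  fun i => if S i = Letter.one then 1 else if S i = Letter.zero then -1 else 0

/-- The exposing linear functional. -/
def sFun {n : ℕ} (S : FSeq n) : (Fin n → ℝ) →ₗ[ℝ] ℝ where
  toFun x := ∑ i, sCoeff S i * x i
  map_add' x y := by
    simp only [Pi.add_apply, mul_add, Finset.sum_add_distrib]
  map_smul' r x := by
    simp only [RingHom.id_apply, smul_eq_mul, Finset.mul_sum, Pi.smul_apply]
    exact Finset.sum_congr rfl fun i _ => by ring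

lemma sFun_apply {n : ℕ} (S : FSeq n) (x : Fin n → ℝ) :
    sFun S x = ∑ i, sCoeff S i * x i := rfl

lemma sCoeff_mul_le {n : ℕ} (S : FSeq n) (x : Fin n → ℝ) (hx : ∀ i, x i = 0 ∨ x i = 1)
    (i : Fin n) : sCoeff S i * x i ≤ (if S i = Letter.one then (1 : ℝ) else 0) := by
  rcases hx i with h | h <;> cases hSi : S i <;>
    simp [sCoeff, hSi, h]

lemma sum_ind_eq_count1 {n : ℕ} (S : FSeq n) :
    ∑ i, (if S i = Letter.one then (1 : ℝ) else 0) = (count1 S : ℝ) := by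
  rw [Finset.sum_boole]
  rfl

lemma sFun_le {n : ℕ} (S : FSeq n) (x : Fin n → ℝ) (hx : ∀ i, x i = 0 ∨ x i = 1) :
    sFun S x ≤ (count1 S : ℝ) := by
  rw [sFun_apply, ← sum_ind_eq_count1 S]
  exact Finset.sum_le_sum fun i _ => sCoeff_mul_le S x hx i

lemma sFun_eq_of_compat {n : ℕ} (S : FSeq n) (x : Fin n → ℝ)
    (h0 : ∀ i, S i = Letter.zero → x i = 0) (h1 : ∀ i, S i = Letter.one → x i = 1) :
    sFun S x = (count1 S : ℝ) := by
  rw [sFun_apply, ← sum_ind_eq_count1 S]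
  refine Finset.sum_congr rfl fun i _ => ?_
  cases hSi : S i
  · simp [sCoeff, hSi, h0 i hSi]
  · simp [sCoeff, hSi, h1 i hSi]
  · simp [sCoeff, hSi]

lemma compat_of_sFun_eq {n : ℕ} (S : FSeq n) (x : Fin n → ℝ)
    (hx : ∀ i, x i = 0 ∨ x i = 1) (hfx : sFun S x = (count1 S : ℝ)) :
    (∀ i, S i = Letter.zero → x i = 0) ∧ (∀ i, S i = Letter.one → x i = 1) := by
  have hsum : ∑ i, ((if S i = Letter.one then (1 : ℝ) else 0) - sCoeff S i * x i) = 0 := by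
    rw [Finset.sum_sub_distrib, sum_ind_eq_count1 S, ← sFun_apply, hfx, sub_self]
  have hnn : ∀ i ∈ Finset.univ,
      0 ≤ (if S i = Letter.one then (1 : ℝ) else 0) - sCoeff S i * x i := fun i _ =>
    sub_nonneg.mpr (sCoeff_mul_le S x hx i)
  have hall := (Finset.sum_eq_zero_iff_of_nonneg hnn).mp hsum
  constructor
  · intro i hSi
    have := hall i (Finset.mem_univ i)
    simp only [sCoeff, hSi] at this
    rcases hx i with h | h
    · exact h
    · simp [h] at this
  · intro i hSi
    have := hall i (Finset.mem_univ i)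
    simp only [sCoeff, hSi] at this
    rcases hx i with h | h
    · simp [h] at this
    · exact h

lemma exists_compat_vertex {n k : ℕ} (S : FSeq n) (h1 : count1 S ≤ k)
    (h2 : k ≤ count1 S + countStar S) :
    ∃ x : Fin n → ℝ, ((∀ i, x i = 0 ∨ x i = 1) ∧ ∑ i, x i = (k : ℝ)) ∧
      (∀ i, S i = Letter.zero → x i = 0) ∧ (∀ i, S i = Letter.one → x i = 1) := by
  classical
  have hcard : k - count1 S ≤ (Finset.univ.filter fun i => S i = Letter.star).card := by
    have : countStar S = (Finset.univ.filter fun i => S i = Letter.star).card := rfl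
    omega
  obtain ⟨T, hTsub, hTcard⟩ :=
    Finset.exists_subset_card_eq hcard
  refine ⟨fun i => if S i = Letter.one ∨ i ∈ T then 1 else 0, ⟨fun i => ?_, ?_⟩, ?_, ?_⟩
  · by_cases h : S i = Letter.one ∨ i ∈ T <;> simp [h]
  · rw [Finset.sum_boole]
    have hfil : (Finset.univ.filter fun i => S i = Letter.one ∨ i ∈ T) =
        (Finset.univ.filter fun i => S i = Letter.one) ∪ T := by
      rw [Finset.filter_or]
      congr 1
      ext i
      simp
    have hdisj : Disjoint (Finset.univ.filter fun i => S i = Letter.one) T := by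
      rw [Finset.disjoint_left]
      intro a ha haT
      have h1a : S a = Letter.one := (Finset.mem_filter.mp ha).2
      have h2a : S a = Letter.star := (Finset.mem_filter.mp (hTsub haT)).2
      rw [h1a] at h2a
      exact Letter.noConfusion h2a
    rw [hfil, Finset.card_union_of_disjoint hdisj, hTcard]
    have : count1 S + (k - count1 S) = k := by omega
    have hc : (Finset.univ.filter fun i => S i = Letter.one).card + (k - count1 S) = k := this
    exact_mod_cast congrArg (Nat.cast (R := ℝ)) hc
  · intro i hSi
    have hi1 : ¬ S i = Letter.one := by rw [hSi]; exact fun h => Letter.noConfusion h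
    have hiT : i ∉ T := fun hiT => by
      have : S i = Letter.star := (Finset.mem_filter.mp (hTsub hiT)).2
      rw [hSi] at this
      exact Letter.noConfusion this
    simp [hi1, hiT]
  · intro i hSi
    simp [hSi]

/-- For every face sequence `S`, the set `F(S)` is an exposed face of the
hypersimplex `J(n,k)`: there is a linear functional `f` on `ℝⁿ` such that
`F(S) = {x ∈ J(n,k) | ∀ y ∈ J(n,k), f y ≤ f x}`. -/
theorem faceOf_is_exposed (n k : ℕ) (hk1 : 1 ≤ k) (hk2 : k ≤ n - 1)
    (S : FSeq n) (hS : FaceSeq k S) :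
    ∃ f : (Fin n → ℝ) →ₗ[ℝ] ℝ,
      FaceOf n k S = {x ∈ hypersimplex n k | ∀ y ∈ hypersimplex n k, f y ≤ f x} := by
  classical
  refine ⟨sFun S, ?_⟩
  set m : ℝ := (count1 S : ℝ) with hm
  set V : Set (Fin n → ℝ) := {x | (∀ i, x i = 0 ∨ x i = 1) ∧ ∑ i, x i = (k : ℝ)} with hV
  set W : Set (Fin n → ℝ) := {x | ((∀ i, x i = 0 ∨ x i = 1) ∧ ∑ i, x i = (k : ℝ)) ∧
    (∀ i, S i = Letter.zero → x i = 0) ∧ (∀ i, S i = Letter.one → x i = 1)} with hW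
  have hWV : W ⊆ V := fun x hx => hx.1
  have hk1' : count1 S ≤ k := by
    rcases hS with ⟨_, h⟩ | ⟨h, _⟩ <;> omega
  have hk2' : k ≤ count1 S + countStar S := by
    rcases hS with ⟨h0, h⟩ | ⟨_, h⟩ <;> omega
  obtain ⟨v₀, hv₀V, hv₀0, hv₀1⟩ := exists_compat_vertex S hk1' hk2'
  have hv₀f : sFun S v₀ = m := sFun_eq_of_compat S v₀ hv₀0 hv₀1
  -- the hypersimplex lies in the halfspace { f ≤ m }
  have hhalf : hypersimplex n k ⊆ {x | sFun S x ≤ m} := by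
    apply convexHull_min
    · intro x hx
      exact sFun_le S x hx.1
    · exact convex_halfSpace_le (sFun S).isLinear m
  -- F(S) lies in the hyperplane { f = m }
  have hhyper : FaceOf n k S ⊆ {x | sFun S x = m} := by
    apply convexHull_min
    · intro x hx
      exact sFun_eq_of_compat S x hx.2.1 hx.2.2
    · exact convex_hyperplane (sFun S).isLinear m
  have hv₀mem : v₀ ∈ hypersimplex n k := subset_convexHull ℝ _ hv₀V
  ext x
  constructor
  · -- F(S) ⊆ exposed set
    intro hx
    have hxhyp : x ∈ hypersimplex n k := convexHull_mono hWV hx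
    have hxf : sFun S x = m := hhyper hx
    refine ⟨hxhyp, fun y hy => ?_⟩
    rw [hxf]
    exact hhalf hy
  · -- exposed set ⊆ F(S)
    rintro ⟨hxhyp, hxmax⟩
    have hxf : sFun S x = m :=
      le_antisymm (hhalf hxhyp) (hv₀f ▸ hxmax v₀ hv₀mem)
    -- use a convex combination representation of x
    rw [hypersimplex, convexHull_eq] at hxhyp
    obtain ⟨ι, t, w, z, hw0, hw1, hz, hxc⟩ := hxhyp
    have hcm : t.centerMass w z = ∑ i ∈ t, w i • z i :=
      Finset.centerMass_eq_of_sum_1 t z hw1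
    have hfx' : ∑ i ∈ t, w i * sFun S (z i) = m := by
      rw [← hxf, ← hxc, hcm, map_sum]
      exact Finset.sum_congr rfl fun i _ => by rw [map_smul, smul_eq_mul]
    have hsum0 : ∑ i ∈ t, w i * (m - sFun S (z i)) = 0 := by
      have : ∑ i ∈ t, w i * (m - sFun S (z i)) =
          (∑ i ∈ t, w i) * m - ∑ i ∈ t, w i * sFun S (z i) := by
        rw [Finset.sum_mul, ← Finset.sum_sub_distrib]
        exact Finset.sum_congr rfl fun i _ => by ring
      rw [this, hw1, one_mul, hfx', sub_self]
    have hnn : ∀ i ∈ t, 0 ≤ w i * (m - sFun S (z i)) := fun i hi =>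
      mul_nonneg (hw0 i hi) (sub_nonneg.mpr (sFun_le S (z i) (hz i hi).1))
    have hzero := (Finset.sum_eq_zero_iff_of_nonneg hnn).mp hsum0
    have hmax : ∀ i ∈ t, w i ≠ 0 → sFun S (z i) = m := by
      intro i hi hwi
      have := hzero i hi
      rcases mul_eq_zero.mp this with h | h
      · exact absurd h hwi
      · linarith [sub_eq_zero.mp h]
    -- restrict to positive weights
    have hxc' : (t.filter fun i => w i ≠ 0).centerMass w z = x := by
      rw [Finset.centerMass_filter_ne_zero, hxc]
    rw [FaceOf, ← hW]
    rw [← hxc']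
    apply Finset.centerMass_mem_convexHull
    · intro i hi
      exact hw0 i (Finset.mem_filter.mp hi).1
    · rw [Finset.sum_filter_ne_zero, hw1]
      exact one_pos
    · intro i hi
      obtain ⟨hit, hwi⟩ := Finset.mem_filter.mp hi
      have hzi := hz i hit
      have hfzi := hmax i hit hwi
      exact ⟨hzi, compat_of_sFun_eq S (z i) hzi.1 hfzi⟩
end

section
/- For any m₀ and m₁ with 0 ≤ m₀ ≤ n−k−1 and 1 ≤ m₁ ≤ k−1, every face sequence S other than v₀ is of type i for exactly one i with 1 ≤ i ≤ 10; that is, the ten rules partition the set of face sequences other than v₀ into the subsets of face sequences of type i, 1 ≤ i ≤ 10. -/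
set_option linter.unusedVariables false

/-- `S(0)`, the number of `0`'s in `S`. -/
def count0 {n : ℕ} (S : FSeq n) : ℕ := (Finset.univ.filter fun i => S i = Letter.zero).card

/-- `v₀`, the sequence of `k` ones followed by `n - k` zeros. -/
def v0seq (n k : ℕ) : FSeq n := fun i => if (i : ℕ) < k then Letter.one else Letter.zero

/-- `S` contains at least one `∗`. -/
def hasStar {n : ℕ} (S : FSeq n) : Prop := ∃ i, S i = Letter.star

/-- There is a `1` to the right of the rightmost `∗` (in particular `S` contains a `∗`). -/
def OneRight {n : ℕ} (S : FSeq n) : Prop :=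
  hasStar S ∧ ∃ i, S i = Letter.one ∧ ∀ j, i < j → S j ≠ Letter.star

/-- There is no `1` to the right of the rightmost `∗` (and `S` contains a `∗`). -/
def NoOneRight {n : ℕ} (S : FSeq n) : Prop :=
  hasStar S ∧ ∀ i, S i = Letter.one → ∃ j, i < j ∧ S j = Letter.star

/-- There is a `0` to the left of the leftmost `∗` (in particular `S` contains a `∗`). -/
def ZeroLeft {n : ℕ} (S : FSeq n) : Prop :=
  hasStar S ∧ ∃ i, S i = Letter.zero ∧ ∀ j, j < i → S j ≠ Letter.star

/-- There is no `0` to the left of the leftmost `∗` (and `S` contains a `∗`). -/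
def NoZeroLeft {n : ℕ} (S : FSeq n) : Prop :=
  hasStar S ∧ ∀ i, S i = Letter.zero → ∃ j, j < i ∧ S j = Letter.star

/-- `i` is the position of the rightmost `1` of `S`. -/
def IsRightmostOne {n : ℕ} (S : FSeq n) (i : Fin n) : Prop :=
  S i = Letter.one ∧ ∀ j, i < j → S j ≠ Letter.one

/-- `i` is the position of the rightmost `∗` of `S`. -/
def IsRightmostStar {n : ℕ} (S : FSeq n) (i : Fin n) : Prop :=
  S i = Letter.star ∧ ∀ j, i < j → S j ≠ Letter.star

/-- `i` is the position of the leftmost `0` of `S`. -/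
def IsLeftmostZero {n : ℕ} (S : FSeq n) (i : Fin n) : Prop :=
  S i = Letter.zero ∧ ∀ j, j < i → S j ≠ Letter.zero

/-- `i` is the position of the leftmost `∗` of `S`. -/
def IsLeftmostStar {n : ℕ} (S : FSeq n) (i : Fin n) : Prop :=
  S i = Letter.star ∧ ∀ j, j < i → S j ≠ Letter.star

/-- Condition of rule (1), subcondition (a). -/
def Cond1a {n : ℕ} (k m0 m1 : ℕ) (S : FSeq n) : Prop :=
  count1 S + 1 ≤ k ∧ OneRight S ∧ count1 S ≠ m1

/-- Condition of rule (1), subcondition (b). -/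
def Cond1b {n : ℕ} (k m0 m1 : ℕ) (S : FSeq n) : Prop :=
  count1 S + 1 ≤ k ∧ OneRight S ∧ count1 S = m1 ∧ m0 < count0 S

/-- Condition of rule (1), subcondition (c): no `0` to the left of the leftmost `∗`. -/
def Cond1c {n : ℕ} (k m0 m1 : ℕ) (S : FSeq n) : Prop :=
  count1 S + 1 ≤ k ∧ OneRight S ∧ count1 S = m1 ∧ count0 S = m0 ∧ NoZeroLeft S

/-- Condition of rule (2), subcondition (a): here `count1 S + 1 ≠ m1` encodes `S(1) ≠ m₁ - 1`. -/
def Cond2a {n : ℕ} (k m0 m1 : ℕ) (S : FSeq n) : Prop :=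
  count1 S + 2 ≤ k ∧ NoOneRight S ∧ count1 S + 1 ≠ m1

/-- Condition of rule (2), subcondition (b). -/
def Cond2b {n : ℕ} (k m0 m1 : ℕ) (S : FSeq n) : Prop :=
  count1 S + 2 ≤ k ∧ NoOneRight S ∧ count1 S + 1 = m1 ∧ m0 < count0 S

/-- Condition of rule (2), subcondition (c). -/
def Cond2c {n : ℕ} (k m0 m1 : ℕ) (S : FSeq n) : Prop :=
  count1 S + 2 ≤ k ∧ NoOneRight S ∧ count1 S + 1 = m1 ∧ count0 S = m0 ∧ NoZeroLeft S

/-- `S` is of type 1 (satisfies the condition of rule (1)). -/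
def Type1 {n : ℕ} (k m0 m1 : ℕ) (S : FSeq n) : Prop :=
  Cond1a k m0 m1 S ∨ Cond1b k m0 m1 S ∨ Cond1c k m0 m1 S

/-- `S` is of type 2 (satisfies the condition of rule (2)). -/
def Type2 {n : ℕ} (k m0 m1 : ℕ) (S : FSeq n) : Prop :=
  Cond2a k m0 m1 S ∨ Cond2b k m0 m1 S ∨ Cond2c k m0 m1 S

/-- `S` is of type 3: `S(1) = k-1`, `S(0) ≤ n-k-1`, no `1` right of the rightmost `∗`,
a `0` left of the leftmost `∗`. -/
def Type3 {n : ℕ} (k : ℕ) (S : FSeq n) : Prop :=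
  count1 S + 1 = k ∧ count0 S + k + 1 ≤ n ∧ NoOneRight S ∧ ZeroLeft S

/-- `S` is of type 4: `S(1) = k-1`, `S(0) ≤ n-k-2`, no `1` right of the rightmost `∗`,
no `0` left of the leftmost `∗`. -/
def Type4 {n : ℕ} (k : ℕ) (S : FSeq n) : Prop :=
  count1 S + 1 = k ∧ count0 S + k + 2 ≤ n ∧ NoOneRight S ∧ NoZeroLeft S

/-- `S` is of type 5: `S(1) = m₁`, `S(0) ≤ m₀`, a `1` right of the rightmost `∗`,
a `0` left of the leftmost `∗`. -/
def Type5 {n : ℕ} (m0 m1 : ℕ) (S : FSeq n) : Prop :=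
  count1 S = m1 ∧ count0 S ≤ m0 ∧ OneRight S ∧ ZeroLeft S

/-- `S` is of type 6: `S(1) = m₁`, `S(0) < m₀`, a `1` right of the rightmost `∗`,
no `0` left of the leftmost `∗`. -/
def Type6 {n : ℕ} (m0 m1 : ℕ) (S : FSeq n) : Prop :=
  count1 S = m1 ∧ count0 S < m0 ∧ OneRight S ∧ NoZeroLeft S

/-- `S` is of type 7: `S(1) = m₁-1`, `S(0) ≤ m₀`, no `1` right of the rightmost `∗`,
a `0` left of the leftmost `∗`. -/
def Type7 {n : ℕ} (m0 m1 : ℕ) (S : FSeq n) : Prop :=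
  count1 S + 1 = m1 ∧ count0 S ≤ m0 ∧ NoOneRight S ∧ ZeroLeft S

/-- `S` is of type 8: `S(1) = m₁-1`, `S(0) < m₀`, no `1` right of the rightmost `∗`,
no `0` left of the leftmost `∗`. -/
def Type8 {n : ℕ} (m0 m1 : ℕ) (S : FSeq n) : Prop :=
  count1 S + 1 = m1 ∧ count0 S < m0 ∧ NoOneRight S ∧ NoZeroLeft S

/-- `S` is of type 9: `S(1) = k`, `S(0) = n-k`, and `S ≠ v₀`. -/
def Type9 {n : ℕ} (k : ℕ) (S : FSeq n) : Prop :=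
  count1 S = k ∧ count0 S + k = n ∧ S ≠ v0seq n k

/-- `S` is of type 10: `S(1) = k-1`, `S(0) = n-k-1`, no `1` right of the rightmost `∗`,
no `0` left of the leftmost `∗`. -/
def Type10 {n : ℕ} (k : ℕ) (S : FSeq n) : Prop :=
  count1 S + 1 = k ∧ count0 S + k + 1 = n ∧ NoOneRight S ∧ NoZeroLeft S

/-- `S` is of type `i` for `1 ≤ i ≤ 10` (and of no type otherwise). -/
def OfType {n : ℕ} (k m0 m1 : ℕ) (i : ℕ) (S : FSeq n) : Prop :=
  match i with
  | 1 => Type1 k m0 m1 S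
  | 2 => Type2 k m0 m1 S
  | 3 => Type3 k S
  | 4 => Type4 k S
  | 5 => Type5 m0 m1 S
  | 6 => Type6 m0 m1 S
  | 7 => Type7 m0 m1 S
  | 8 => Type8 m0 m1 S
  | 9 => Type9 k S
  | 10 => Type10 k S
  | _ => False

/-- The replacement of rule (1): replace the rightmost `1` with `∗`. -/
def Apply1 {n : ℕ} (S S' : FSeq n) : Prop :=
  ∃ i, IsRightmostOne S i ∧ S' = Function.update S i Letter.star

/-- The replacement of rule (2): replace the rightmost `∗` with `1`. -/
def Apply2 {n : ℕ} (S S' : FSeq n) : Prop :=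
  ∃ i, IsRightmostStar S i ∧ S' = Function.update S i Letter.one

/-- The replacement of rules (3), (5) and (7): replace the leftmost `0` with `∗`. -/
def Apply3 {n : ℕ} (S S' : FSeq n) : Prop :=
  ∃ i, IsLeftmostZero S i ∧ S' = Function.update S i Letter.star

/-- The replacement of rules (4), (6) and (8): replace the leftmost `∗` with `0`. -/
def Apply4 {n : ℕ} (S S' : FSeq n) : Prop :=
  ∃ i, IsLeftmostStar S i ∧ S' = Function.update S i Letter.zero

/-- The replacement of rule (9): replace the leftmost `0` and the rightmost `1` each with `∗`. -/
def Apply9 {n : ℕ} (S S' : FSeq n) : Prop :=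
  ∃ i j, IsLeftmostZero S i ∧ IsRightmostOne S j ∧
    S' = Function.update (Function.update S i Letter.star) j Letter.star

/-- The replacement of rule (10): replace the leftmost `∗` with `0` and the other `∗` with `1`. -/
def Apply10 {n : ℕ} (S S' : FSeq n) : Prop :=
  ∃ i j, IsLeftmostStar S i ∧ IsRightmostStar S j ∧ i ≠ j ∧
    S' = Function.update (Function.update S i Letter.zero) j Letter.one

/-- The matching `V` on face sequences: a face sequence `S` of type 1, 3, 5, 7 or 9 is
matched with the result `S'` of applying the corresponding rule to it. -/
def Vmatch {n : ℕ} (k m0 m1 : ℕ) (S S' : FSeq n) : Prop :=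
  FaceSeq k S ∧
    ((Type1 k m0 m1 S ∧ Apply1 S S') ∨
     (Type3 k S ∧ Apply3 S S') ∨
     (Type5 m0 m1 S ∧ Apply3 S S') ∨
     (Type7 m0 m1 S ∧ Apply3 S S') ∨
     (Type9 k S ∧ Apply9 S S'))

/-- The vertex set of a face sequence `S`: the vertex sequences (0/1-sequences with
exactly `k` ones) agreeing with `S` wherever `S` is not `∗`. -/
def VertexSet {n : ℕ} (k : ℕ) (S : FSeq n) : Set (FSeq n) :=
  {v | (∀ i, v i ≠ Letter.star) ∧ count1 v = k ∧ ∀ i, S i ≠ Letter.star → v i = S i}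

/-- The dimension of the face `F(S)`. -/
def fdim {n : ℕ} (S : FSeq n) : ℕ :=
  if countStar S = 0 then 0 else countStar S - 1

/-- `T` is a codimension-1 face of `S`. -/
def Codim1 {n : ℕ} (k : ℕ) (T S : FSeq n) : Prop :=
  VertexSet k T ⊂ VertexSet k S ∧ fdim T + 1 = fdim S

/-- A (nontrivial) `V`-path `a₀, b₀, a₁, b₁, …, b_r, a_{r+1}` of face sequences. -/
structure VPath (n k m0 m1 r : ℕ) where
  a : Fin (r + 2) → FSeq n
  b : Fin (r + 1) → FSeq n
  face_a : ∀ i, FaceSeq k (a i)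
  face_b : ∀ i, FaceSeq k (b i)
  mem : ∀ i : Fin (r + 1), Vmatch k m0 m1 (a i.castSucc) (b i)
  codim_left : ∀ i : Fin (r + 1), Codim1 k (a i.castSucc) (b i)
  codim_right : ∀ i : Fin (r + 1), Codim1 k (a i.succ) (b i)
  step_ne : ∀ i : Fin (r + 1), a i.castSucc ≠ a i.succ

section Aux

lemma counts_total {n : ℕ} (S : FSeq n) :
    count0 S + count1 S + countStar S = n := by
  classical
  unfold count0 count1 countStar
  rw [Finset.card_filter, Finset.card_filter, Finset.card_filter,
    ← Finset.sum_add_distrib, ← Finset.sum_add_distrib]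
  have h : ∀ i ∈ (Finset.univ : Finset (Fin n)),
      ((if S i = Letter.zero then 1 else 0) + (if S i = Letter.one then 1 else 0) +
        (if S i = Letter.star then 1 else 0)) = 1 := by
    intro i _; cases h : S i <;> simp
  rw [Finset.sum_congr rfl h]
  simp

lemma hasStar_of_countStar {n : ℕ} (S : FSeq n) (h : countStar S ≠ 0) : hasStar S := by
  classical
  obtain ⟨i, hi⟩ := Finset.card_ne_zero.mp h
  simp only [Finset.mem_filter, Finset.mem_univ, true_and] at hi
  exact ⟨i, hi⟩

lemma not_hasStar_of_countStar {n : ℕ} (S : FSeq n) (h : countStar S = 0) : ¬ hasStar S := by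
  classical
  rintro ⟨i, hi⟩
  have : i ∈ Finset.univ.filter fun i => S i = Letter.star := by simp [hi]
  rw [Finset.card_eq_zero.mp h] at this
  exact absurd this (Finset.notMem_empty i)

lemma noOneRight_iff {n : ℕ} {S : FSeq n} (hstar : hasStar S) :
    NoOneRight S ↔ ¬ OneRight S := by
  constructor
  · rintro ⟨_, h⟩ ⟨_, i, hi, hr⟩
    obtain ⟨j, hij, hj⟩ := h i hi
    exact hr j hij hj
  · intro h
    refine ⟨hstar, fun i hi => ?_⟩
    by_contra hc
    push_neg at hc
    exact h ⟨hstar, i, hi, hc⟩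

lemma noZeroLeft_iff {n : ℕ} {S : FSeq n} (hstar : hasStar S) :
    NoZeroLeft S ↔ ¬ ZeroLeft S := by
  constructor
  · rintro ⟨_, h⟩ ⟨_, i, hi, hr⟩
    obtain ⟨j, hij, hj⟩ := h i hi
    exact hr j hij hj
  · intro h
    refine ⟨hstar, fun i hi => ?_⟩
    by_contra hc
    push_neg at hc
    exact h ⟨hstar, i, hi, hc⟩

/-- Arithmetic abstraction of `OfType` in the case where `S` contains a star:
`o` stands for `OneRight S`, `z` for `ZeroLeft S`. -/
def TA (n k m0 m1 c0 c1 : ℕ) (o z : Prop) : ℕ → Prop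
  | 1 => (c1 + 1 ≤ k ∧ o ∧ c1 ≠ m1) ∨ (c1 + 1 ≤ k ∧ o ∧ c1 = m1 ∧ m0 < c0) ∨
         (c1 + 1 ≤ k ∧ o ∧ c1 = m1 ∧ c0 = m0 ∧ ¬z)
  | 2 => (c1 + 2 ≤ k ∧ ¬o ∧ c1 + 1 ≠ m1) ∨ (c1 + 2 ≤ k ∧ ¬o ∧ c1 + 1 = m1 ∧ m0 < c0) ∨
         (c1 + 2 ≤ k ∧ ¬o ∧ c1 + 1 = m1 ∧ c0 = m0 ∧ ¬z)
  | 3 => c1 + 1 = k ∧ c0 + k + 1 ≤ n ∧ ¬o ∧ z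
  | 4 => c1 + 1 = k ∧ c0 + k + 2 ≤ n ∧ ¬o ∧ ¬z
  | 5 => c1 = m1 ∧ c0 ≤ m0 ∧ o ∧ z
  | 6 => c1 = m1 ∧ c0 < m0 ∧ o ∧ ¬z
  | 7 => c1 + 1 = m1 ∧ c0 ≤ m0 ∧ ¬o ∧ z
  | 8 => c1 + 1 = m1 ∧ c0 < m0 ∧ ¬o ∧ ¬z
  | 9 => c1 = k
  | 10 => c1 + 1 = k ∧ c0 + k + 1 = n ∧ ¬o ∧ ¬z
  | _ => False

lemma TA_key (n k m0 m1 c0 c1 cs : ℕ) (o z : Prop)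
    (hm1u : m1 + 1 ≤ k)
    (htot : c0 + c1 + cs = n) (h1 : c1 + 1 ≤ k) (h2 : k + 1 ≤ c1 + cs) :
    ∃! i, 1 ≤ i ∧ i ≤ 10 ∧ TA n k m0 m1 c0 c1 o z i := by
  classical
  apply existsUnique_of_exists_of_unique
  · by_cases ho : o
    · by_cases hz : z
      · by_cases h5 : c1 = m1 ∧ c0 ≤ m0
        · exact ⟨5, by norm_num, by norm_num, h5.1, h5.2, ho, hz⟩
        · refine ⟨1, by norm_num, by norm_num, ?_⟩
          by_cases hc : c1 = m1
          · exact Or.inr (Or.inl ⟨h1, ho, hc, by omega⟩)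
          · exact Or.inl ⟨h1, ho, hc⟩
      · by_cases hc : c1 = m1
        · by_cases hcc : c0 < m0
          · exact ⟨6, by norm_num, by norm_num, hc, hcc, ho, hz⟩
          · by_cases heq : c0 = m0
            · exact ⟨1, by norm_num, by norm_num, Or.inr (Or.inr ⟨h1, ho, hc, heq, hz⟩)⟩
            · exact ⟨1, by norm_num, by norm_num, Or.inr (Or.inl ⟨h1, ho, hc, by omega⟩)⟩
        · exact ⟨1, by norm_num, by norm_num, Or.inl ⟨h1, ho, hc⟩⟩
    · by_cases hk : c1 + 1 = k
      · by_cases hz : z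
        · exact ⟨3, by norm_num, by norm_num, hk, by omega, ho, hz⟩
        · by_cases hn : c0 + k + 1 = n
          · exact ⟨10, by norm_num, by norm_num, hk, hn, ho, hz⟩
          · exact ⟨4, by norm_num, by norm_num, hk, by omega, ho, hz⟩
      · have hk2 : c1 + 2 ≤ k := by omega
        by_cases hz : z
        · by_cases h7 : c1 + 1 = m1 ∧ c0 ≤ m0
          · exact ⟨7, by norm_num, by norm_num, h7.1, h7.2, ho, hz⟩
          · refine ⟨2, by norm_num, by norm_num, ?_⟩
            by_cases hc : c1 + 1 = m1
            · exact Or.inr (Or.inl ⟨hk2, ho, hc, by omega⟩)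
            · exact Or.inl ⟨hk2, ho, hc⟩
        · by_cases hc : c1 + 1 = m1
          · by_cases hcc : c0 < m0
            · exact ⟨8, by norm_num, by norm_num, hc, hcc, ho, hz⟩
            · by_cases heq : c0 = m0
              · exact ⟨2, by norm_num, by norm_num, Or.inr (Or.inr ⟨hk2, ho, hc, heq, hz⟩)⟩
              · exact ⟨2, by norm_num, by norm_num, Or.inr (Or.inl ⟨hk2, ho, hc, by omega⟩)⟩
          · exact ⟨2, by norm_num, by norm_num, Or.inl ⟨hk2, ho, hc⟩⟩
  · intro y1 y2 hy1 hy2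
    obtain ⟨ha1, hb1, hT1⟩ := hy1
    obtain ⟨ha2, hb2, hT2⟩ := hy2
    by_cases ho : o <;> by_cases hz : z <;>
      interval_cases y1 <;> interval_cases y2 <;>
      simp only [TA, ho, hz, not_true, not_false_iff, and_true, and_false, true_and,
        false_and, or_false, false_or, not_true_eq_false, not_false_eq_true] at hT1 hT2 <;>
      omega

end Aux

/-- For any admissible `m₀, m₁`, every face sequence other than `v₀`
is of type `i` for exactly one `i` with `1 ≤ i ≤ 10`. -/
theorem rules_partition (n k m0 m1 : ℕ) (hk1 : 1 ≤ k) (hk2 : k ≤ n - 1)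
    (hm0 : m0 + k + 1 ≤ n) (hm1l : 1 ≤ m1) (hm1u : m1 + 1 ≤ k)
    (S : FSeq n) (hS : FaceSeq k S) (hSne : S ≠ v0seq n k) :
    ∃! i : ℕ, 1 ≤ i ∧ i ≤ 10 ∧ OfType k m0 m1 i S := by
  classical
  have htot := counts_total S
  rcases hS with ⟨hst0, h1k⟩ | ⟨h1le, hge⟩
  · -- no star: type 9 only
    have hns : ¬ hasStar S := not_hasStar_of_countStar S hst0
    have hO : ¬ OneRight S := fun h => hns h.1
    have hNO : ¬ NoOneRight S := fun h => hns h.1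
    have hZ : ¬ ZeroLeft S := fun h => hns h.1
    have hNZ : ¬ NoZeroLeft S := fun h => hns h.1
    refine ⟨9, ⟨by norm_num, by norm_num, h1k, by omega, hSne⟩, ?_⟩
    intro j hj
    obtain ⟨hj1, hj2, hT⟩ := hj
    interval_cases j <;>
      first
        | rfl
        | simp only [OfType, Type1, Type2, Type3, Type4, Type5, Type6, Type7, Type8,
            Type10, Cond1a, Cond1b, Cond1c, Cond2a, Cond2b, Cond2c] at hT <;>
          first
            | exact absurd hT.2.2.1 hO
            | exact absurd hT.2.2.1 hNO
            | rcases hT with hT | hT | hT <;>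
              first
                | exact absurd hT.2.1 hO
                | exact absurd hT.2.1 hNO
  · -- has a star
    have hstar : hasStar S := hasStar_of_countStar S (by omega)
    have hN1 := noOneRight_iff hstar
    have hN0 := noZeroLeft_iff hstar
    have hiff : ∀ i, 1 ≤ i → i ≤ 10 →
        (OfType k m0 m1 i S ↔
          TA n k m0 m1 (count0 S) (count1 S) (OneRight S) (ZeroLeft S) i) := by
      intro i hi1 hi2
      interval_cases i
      · simp only [OfType, TA, Type1, Cond1a, Cond1b, Cond1c, hN0]
      · simp only [OfType, TA, Type2, Cond2a, Cond2b, Cond2c, hN1, hN0]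
      · simp only [OfType, TA, Type3, hN1]
      · simp only [OfType, TA, Type4, hN1, hN0]
      · simp only [OfType, TA, Type5]
      · simp only [OfType, TA, Type6, hN0]
      · simp only [OfType, TA, Type7, hN1]
      · simp only [OfType, TA, Type8, hN1, hN0]
      · simp only [OfType, TA, Type9]
        constructor
        · exact fun h => h.1
        · intro h; omega
      · simp only [OfType, TA, Type10, hN1, hN0]
    have key := TA_key n k m0 m1 (count0 S) (count1 S) (countStar S)
      (OneRight S) (ZeroLeft S) hm1u htot h1le hge
    obtain ⟨i, ⟨hi1, hi2, hT⟩, hu⟩ := key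
    refine ⟨i, ⟨hi1, hi2, (hiff i hi1 hi2).mpr hT⟩, ?_⟩
    rintro j ⟨hj1, hj2, hjT⟩
    exact hu j ⟨hj1, hj2, (hiff j hj1 hj2).mp hjT⟩
end

section
/- Rules (1)(a) and (2)(a) are inverses: if S is a face sequence satisfying subcondition (a) of rule (1) and S′ is the result of applying rule (1) to S, then S′ is a face sequence satisfying subcondition (a) of rule (2) and applying rule (2) to S′ returns S; conversely, if T is a face sequence satisfying subcondition (a) of rule (2) and T′ is the result of applying rule (2) to T, then T′ satisfies subcondition (a) of rule (1) and applying rule (1) to T′ returns T. -/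
set_option linter.unusedVariables false

lemma count_update_aux {n : ℕ} (S : FSeq n) (i : Fin n) (x c : Letter) :
    (Finset.univ.filter fun j => Function.update S i x j = c).card
      + (if S i = c then 1 else 0)
    = (Finset.univ.filter fun j => S j = c).card + (if x = c then 1 else 0) := by
  classical
  rw [Finset.card_filter, Finset.card_filter,
    ← Finset.add_sum_erase _ _ (Finset.mem_univ i),
    ← Finset.add_sum_erase _ (fun j => if S j = c then 1 else 0) (Finset.mem_univ i)]
  simp only [Function.update_self]
  have h : ∀ j ∈ Finset.univ.erase i,
      (if Function.update S i x j = c then 1 else 0) = (if S j = c then (1:ℕ) else 0) := by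
    intro j hj
    rw [Function.update_of_ne (Finset.mem_erase.mp hj).1]
  rw [Finset.sum_congr rfl h]
  ring

lemma count1_update {n : ℕ} (S : FSeq n) (i : Fin n) (x : Letter) :
    count1 (Function.update S i x) + (if S i = Letter.one then 1 else 0)
      = count1 S + (if x = Letter.one then 1 else 0) :=
  count_update_aux S i x Letter.one

lemma countStar_update {n : ℕ} (S : FSeq n) (i : Fin n) (x : Letter) :
    countStar (Function.update S i x) + (if S i = Letter.star then 1 else 0)
      = countStar S + (if x = Letter.star then 1 else 0) :=
  count_update_aux S i x Letter.star

lemma hasStar_count {n : ℕ} {S : FSeq n} (h : hasStar S) : 1 ≤ countStar S := by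
  obtain ⟨i, hi⟩ := h
  exact Finset.card_pos.mpr ⟨i, by simp [hi]⟩

lemma count_hasStar {n : ℕ} {S : FSeq n} (h : 1 ≤ countStar S) : hasStar S := by
  obtain ⟨i, hi⟩ := Finset.card_pos.mp h
  exact ⟨i, (Finset.mem_filter.mp hi).2⟩

/-- **Rules (1)(a) and (2)(a) are inverses of each other.** -/
theorem rule1a_rule2a_inverse (n k m0 m1 : ℕ) (hk1 : 1 ≤ k) (hk2 : k ≤ n - 1)
    (hm0 : m0 + k + 1 ≤ n) (hm1l : 1 ≤ m1) (hm1u : m1 + 1 ≤ k) :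
    (∀ S S' : FSeq n, FaceSeq k S → Cond1a k m0 m1 S → Apply1 S S' →
      FaceSeq k S' ∧ Cond2a k m0 m1 S' ∧ Apply2 S' S) ∧
    (∀ T T' : FSeq n, FaceSeq k T → Cond2a k m0 m1 T → Apply2 T T' →
      FaceSeq k T' ∧ Cond1a k m0 m1 T' ∧ Apply1 T' T) := by
  constructor
  · rintro S S' hFS ⟨hle, hOR, hne⟩ ⟨i, ⟨hi1, hiR⟩, rfl⟩
    have hstar : 1 ≤ countStar S := hasStar_count hOR.1
    have hFS2 : count1 S + 1 ≤ k ∧ k + 1 ≤ count1 S + countStar S := by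
      rcases hFS with ⟨h0, _⟩ | h
      · omega
      · exact h
    have hc1 := count1_update S i Letter.star
    have hcs := countStar_update S i Letter.star
    simp only [hi1, if_true, reduceCtorEq, if_false] at hc1 hcs
    -- hc1 : count1 S' + 1 = count1 S;  hcs : countStar S' = countStar S + 1
    have hS'i : Function.update S i Letter.star i = Letter.star := by simp
    have hS'star : hasStar (Function.update S i Letter.star) := ⟨i, hS'i⟩
    -- positions > i in S have no star (since rightmost 1 at i is right of rightmost star)
    obtain ⟨_, p, hp1, hpR⟩ := hOR
    have hpi : p ≤ i := by
      by_contra h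
      exact hiR p (lt_of_not_ge h) hp1
    have hnostar : ∀ j, i < j → S j ≠ Letter.star := fun j hj =>
      hpR j (lt_of_le_of_lt hpi hj)
    refine ⟨Or.inr ⟨by omega, by omega⟩, ⟨by omega, ⟨hS'star, ?_⟩, by omega⟩, ?_⟩
    · intro q hq
      have hqi : q ≠ i := by
        intro h; rw [h, hS'i] at hq; exact Letter.noConfusion hq
      rw [Function.update_of_ne hqi] at hq
      have hqlt : q < i := by
        rcases lt_trichotomy q i with h | h | h
        · exact h
        · exact absurd h hqi
        · exact absurd hq (hiR q h)
      exact ⟨i, hqlt, hS'i⟩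
    · refine ⟨i, ⟨hS'i, fun j hj => ?_⟩, ?_⟩
      · rw [Function.update_of_ne (Fin.ne_of_gt hj)]
        exact hnostar j hj
      · funext j
        rcases eq_or_ne j i with rfl | h
        · simp [hi1]
        · simp [Function.update_of_ne h]
  · rintro T T' hFT ⟨hle, hNOR, hne⟩ ⟨i, ⟨hi1, hiR⟩, rfl⟩
    have hstar : 1 ≤ countStar T := hasStar_count hNOR.1
    have hFT2 : count1 T + 1 ≤ k ∧ k + 1 ≤ count1 T + countStar T := by
      rcases hFT with ⟨h0, _⟩ | h
      · omega
      · exact h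
    have hc1 := count1_update T i Letter.one
    have hcs := countStar_update T i Letter.one
    simp only [hi1, if_true, reduceCtorEq, if_false] at hc1 hcs
    -- hc1 : count1 T' = count1 T + 1 ; hcs : countStar T' + 1 = countStar T
    have hT'i : Function.update T i Letter.one i = Letter.one := by simp
    have hT'star : hasStar (Function.update T i Letter.one) := by
      apply count_hasStar; omega
    refine ⟨Or.inr ⟨by omega, by omega⟩,
      ⟨by omega, ⟨hT'star, i, hT'i, fun j hj => ?_⟩, by omega⟩,
      ⟨i, ⟨hT'i, fun j hj hjone => ?_⟩, ?_⟩⟩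
    · rw [Function.update_of_ne (Fin.ne_of_gt hj)]
      exact hiR j hj
    · rw [Function.update_of_ne (Fin.ne_of_gt hj)] at hjone
      obtain ⟨l, hl, hls⟩ := hNOR.2 j hjone
      exact hiR l (lt_trans hj hl) hls
    · funext j
      rcases eq_or_ne j i with rfl | h
      · simp [hi1]
      · simp [Function.update_of_ne h]
end

section
/- Rules (1)(b) and (2)(b) are inverses: if S is a face sequence satisfying subcondition (b) of rule (1) and S′ is the result of applying rule (1) to S, then S′ is a face sequence satisfying subcondition (b) of rule (2) and applying rule (2) to S′ returns S; conversely, if T is a face sequence satisfying subcondition (b) of rule (2) and T′ is the result of applying rule (2) to T, then T′ satisfies subcondition (b) of rule (1) and applying rule (1) to T′ returns T. -/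
set_option linter.unusedVariables false

section Helpers

variable {n : ℕ}

/-- count of letter ℓ. -/
def cnt {n : ℕ} (ℓ : Letter) (S : FSeq n) : ℕ :=
  (Finset.univ.filter fun i => S i = ℓ).card

lemma cnt_update_of_ne (S : FSeq n) (i : Fin n) (a ℓ : Letter)
    (ha : a ≠ ℓ) (hS : S i ≠ ℓ) :
    cnt ℓ (Function.update S i a) = cnt ℓ S := by
  unfold cnt
  congr 1
  ext j
  by_cases h : j = i
  · subst h; simp [Function.update_self, ha, hS]
  · simp [Function.update_of_ne h]

lemma cnt_update_add (S : FSeq n) (i : Fin n) (ℓ : Letter) (hS : S i ≠ ℓ) :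
    cnt ℓ (Function.update S i ℓ) = cnt ℓ S + 1 := by
  unfold cnt
  have : (Finset.univ.filter fun j => Function.update S i ℓ j = ℓ)
      = insert i (Finset.univ.filter fun j => S j = ℓ) := by
    ext j
    by_cases h : j = i
    · subst h; simp
    · simp [Function.update_of_ne h, h]
  rw [this, Finset.card_insert_of_notMem (by simp [hS])]

lemma cnt_update_sub (S : FSeq n) (i : Fin n) (a : Letter) (hS : S i ≠ a)
    (ha : a ≠ S i) :
    cnt (S i) (Function.update S i a) + 1 = cnt (S i) S := by
  unfold cnt
  have : (Finset.univ.filter fun j => S j = S i)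
      = insert i (Finset.univ.filter fun j => Function.update S i a j = S i) := by
    ext j
    by_cases h : j = i
    · subst h; simp
    · simp [Function.update_of_ne h, h]
  rw [this, Finset.card_insert_of_notMem (by simp [ha])]

lemma hasStar_of_cnt (S : FSeq n) (h : 1 ≤ cnt Letter.star S) : hasStar S := by
  obtain ⟨i, hi⟩ := Finset.card_pos.mp h
  exact ⟨i, (Finset.mem_filter.mp hi).2⟩

lemma count1_eq (S : FSeq n) : count1 S = cnt Letter.one S := rfl
lemma count0_eq (S : FSeq n) : count0 S = cnt Letter.zero S := rfl
lemma countStar_eq (S : FSeq n) : countStar S = cnt Letter.star S := rfl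

end Helpers

/-- **Rules (1)(b) and (2)(b) are inverses of each other.** -/
theorem rule1b_rule2b_inverse (n k m0 m1 : ℕ) (hk1 : 1 ≤ k) (hk2 : k ≤ n - 1)
    (hm0 : m0 + k + 1 ≤ n) (hm1l : 1 ≤ m1) (hm1u : m1 + 1 ≤ k) :
    (∀ S S' : FSeq n, FaceSeq k S → Cond1b k m0 m1 S → Apply1 S S' →
      FaceSeq k S' ∧ Cond2b k m0 m1 S' ∧ Apply2 S' S) ∧
    (∀ T T' : FSeq n, FaceSeq k T → Cond2b k m0 m1 T → Apply2 T T' →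
      FaceSeq k T' ∧ Cond1b k m0 m1 T' ∧ Apply1 T' T) := by
  constructor
  · rintro S S' hF ⟨h1k, hOR, hm1S, hm0S⟩ ⟨i, ⟨hi1, hiR⟩, rfl⟩
    -- counts of S' = update S i star
    have hc1 : count1 (Function.update S i Letter.star) + 1 = count1 S := by
      rw [count1_eq, count1_eq, ← hi1]
      exact cnt_update_sub S i Letter.star (hi1 ▸ (by simp)) (hi1 ▸ (by simp))
    have hc0 : count0 (Function.update S i Letter.star) = count0 S := by
      rw [count0_eq, count0_eq]
      exact cnt_update_of_ne S i Letter.star Letter.zero (by simp) (by simp [hi1])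
    have hcs : countStar (Function.update S i Letter.star) = countStar S + 1 := by
      rw [countStar_eq, countStar_eq]
      exact cnt_update_add S i Letter.star (by simp [hi1])
    -- S is in the second branch of FaceSeq
    have hF2 : k + 1 ≤ count1 S + countStar S := by
      rcases hF with ⟨_, hk⟩ | ⟨_, h⟩
      · omega
      · exact h
    -- no star strictly right of i in S
    have hnsr : ∀ j, i < j → S j ≠ Letter.star := by
      obtain ⟨_, i1, hi1one, hi1r⟩ := hOR
      intro j hj
      have : i1 ≤ i := by
        by_contra h
        exact hiR i1 (lt_of_not_ge h) hi1one
      exact hi1r j (lt_of_le_of_lt this hj)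
    refine ⟨Or.inr ⟨by omega, by omega⟩, ⟨by omega, ?_, by omega, by omega⟩, ?_⟩
    · -- NoOneRight S'
      refine ⟨⟨i, by simp⟩, fun j hj => ?_⟩
      by_cases hji : j = i
      · subst hji; simp at hj
      · rw [Function.update_of_ne hji] at hj
        have hjle : j < i := by
          rcases lt_or_ge i j with h | h
          · exact absurd hj (hiR j h)
          · exact lt_of_le_of_ne h hji
        exact ⟨i, hjle, by simp⟩
    · -- Apply2 S' S
      refine ⟨i, ⟨by simp, fun j hj => ?_⟩, ?_⟩
      · rw [Function.update_of_ne (Fin.ne_of_gt hj)]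
        exact hnsr j hj
      · rw [Function.update_idem, ← hi1, Function.update_eq_self]
  · rintro T T' hF ⟨h2k, hNOR, hm1T, hm0T⟩ ⟨i, ⟨hi1, hiR⟩, rfl⟩
    have hc1 : count1 (Function.update T i Letter.one) = count1 T + 1 := by
      rw [count1_eq, count1_eq]
      exact cnt_update_add T i Letter.one (by simp [hi1])
    have hc0 : count0 (Function.update T i Letter.one) = count0 T := by
      rw [count0_eq, count0_eq]
      exact cnt_update_of_ne T i Letter.one Letter.zero (by simp) (by simp [hi1])
    have hcs : countStar (Function.update T i Letter.one) + 1 = countStar T := by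
      rw [countStar_eq, countStar_eq, ← hi1]
      exact cnt_update_sub T i Letter.one (hi1 ▸ (by simp)) (hi1 ▸ (by simp))
    have hF2 : k + 1 ≤ count1 T + countStar T := by
      rcases hF with ⟨_, hk⟩ | ⟨_, h⟩
      · omega
      · exact h
    -- no one strictly right of i in T
    have hnor : ∀ j, i < j → T j ≠ Letter.one := by
      intro j hj hone
      obtain ⟨j', hj', hstar⟩ := hNOR.2 j hone
      exact hiR j' (lt_trans hj hj') hstar
    refine ⟨Or.inr ⟨by omega, by omega⟩, ⟨by omega, ?_, by omega, by omega⟩, ?_⟩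
    · -- OneRight T'
      have hs : hasStar (Function.update T i Letter.one) := by
        apply hasStar_of_cnt
        rw [← countStar_eq]
        omega
      refine ⟨hs, i, by simp, fun j hj => ?_⟩
      rw [Function.update_of_ne (Fin.ne_of_gt hj)]
      exact fun h => hiR j hj h
    · -- Apply1 T' T
      refine ⟨i, ⟨by simp, fun j hj => ?_⟩, ?_⟩
      · rw [Function.update_of_ne (Fin.ne_of_gt hj)]
        exact hnor j hj
      · rw [Function.update_idem, ← hi1, Function.update_eq_self]
end

section
/- Rules (9) and (10) are inverses: if S is a face sequence of type 9 and S′ is the result of applying rule (9) to S, then S′ is a face sequence of type 10 and applying rule (10) to S′ returns S; conversely, if T is a face sequence of type 10 and T′ is the result of applying rule (10) to T, then T′ is of type 9 (in particular T′ ≠ v₀) and applying rule (9) to T′ returns T. -/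
set_option linter.unusedVariables false

section Helpers

variable {n : ℕ}

lemma cnt_update (S : FSeq n) (i : Fin n) (b c : Letter) :
    (Finset.univ.filter fun p => Function.update S i b p = c).card + (if S i = c then 1 else 0)
      = (Finset.univ.filter fun p => S p = c).card + (if b = c then 1 else 0) := by
  classical
  rw [Finset.card_filter, Finset.card_filter]
  have h : (fun p => if Function.update S i b p = c then (1:ℕ) else 0)
      = Function.update (fun p => if S p = c then (1:ℕ) else 0) i (if b = c then 1 else 0) := by
    funext p
    by_cases hp : p = i <;> simp [hp, Function.update]
  rw [h, Finset.sum_update_of_mem (Finset.mem_univ i),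
    ← Finset.add_sum_erase _ _ (Finset.mem_univ i)]
  simp only [Finset.sdiff_singleton_eq_erase]
  ring

lemma cnt_sum (S : FSeq n) : count0 S + count1 S + countStar S = n := by
  classical
  unfold count0 count1 countStar
  rw [Finset.card_filter, Finset.card_filter, Finset.card_filter,
    ← Finset.sum_add_distrib, ← Finset.sum_add_distrib]
  have h : ∀ p : Fin n, ((if S p = Letter.zero then (1:ℕ) else 0) +
      (if S p = Letter.one then 1 else 0)) + (if S p = Letter.star then 1 else 0) = 1 := by
    intro p; cases h : S p <;> simp [h]
  rw [Finset.sum_congr rfl fun p _ => h p]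
  simp

lemma c0_update (S : FSeq n) (i : Fin n) (b : Letter) :
    count0 (Function.update S i b) + (if S i = Letter.zero then 1 else 0)
      = count0 S + (if b = Letter.zero then 1 else 0) := cnt_update S i b Letter.zero

lemma c1_update (S : FSeq n) (i : Fin n) (b : Letter) :
    count1 (Function.update S i b) + (if S i = Letter.one then 1 else 0)
      = count1 S + (if b = Letter.one then 1 else 0) := cnt_update S i b Letter.one

lemma cs_update (S : FSeq n) (i : Fin n) (b : Letter) :
    countStar (Function.update S i b) + (if S i = Letter.star then 1 else 0)
      = countStar S + (if b = Letter.star then 1 else 0) := cnt_update S i b Letter.star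

lemma no_star (S : FSeq n) (h : countStar S = 0) : ∀ p, S p ≠ Letter.star := by
  intro p hp
  have hmem : p ∈ Finset.univ.filter (fun q => S q = Letter.star) := by simp [hp]
  rw [Finset.card_eq_zero.mp h] at hmem
  exact absurd hmem (Finset.notMem_empty p)

end Helpers


/-- **Rules (9) and (10) are inverses of each other; in particular the result of rule (10) is never `v₀`.** -/
theorem rule9_rule10_inverse (n k m0 m1 : ℕ) (hk1 : 1 ≤ k) (hk2 : k ≤ n - 1)
    (hm0 : m0 + k + 1 ≤ n) (hm1l : 1 ≤ m1) (hm1u : m1 + 1 ≤ k) :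
    (∀ S S' : FSeq n, FaceSeq k S → Type9 k S → Apply9 S S' →
      FaceSeq k S' ∧ Type10 k S' ∧ Apply10 S' S) ∧
    (∀ T T' : FSeq n, FaceSeq k T → Type10 k T → Apply10 T T' →
      FaceSeq k T' ∧ Type9 k T' ∧ Apply9 T' T) := by
  constructor
  · rintro S S' hFS ⟨h1, h0, hne⟩ ⟨i, j, hiz, hjo, rfl⟩
    have hsum := cnt_sum S
    have hstar0 : countStar S = 0 := by omega
    have hnostar := no_star S hstar0
    have hij : i < j := by
      by_contra hij
      have hne' : j ≠ i := by
        intro h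
        have h2 := hjo.1
        rw [h, hiz.1] at h2
        exact absurd h2 (by simp)
      have hji : j < i := lt_of_le_of_ne (not_lt.mp hij) hne'
      have hone : ∀ p, S p = Letter.one ↔ p < i := by
        intro p
        constructor
        · intro hp
          by_contra hpi
          exact hjo.2 p (lt_of_lt_of_le hji (not_lt.mp hpi)) hp
        · intro hpi
          cases h : S p with
          | zero => exact absurd h (hiz.2 p hpi)
          | one => rfl
          | star => exact absurd h (hnostar p)
      have hcard : count1 S = (i : ℕ) := by
        unfold count1
        have heq : Finset.univ.filter (fun p => S p = Letter.one) = Finset.Iio i := by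
          ext p
          simp [Finset.mem_Iio, hone]
        rw [heq, Fin.card_Iio]
      refine hne (funext fun p => ?_)
      by_cases hp : (p : ℕ) < k
      · have : p < i := by rw [Fin.lt_def]; omega
        rw [(hone p).mpr this]
        simp [v0seq, hp]
      · have hnp : ¬ p < i := by rw [Fin.lt_def]; omega
        cases h : S p with
        | zero => simp [v0seq, hp]
        | one => exact absurd ((hone p).mp h) hnp
        | star => exact absurd h (hnostar p)
    have hji' : j ≠ i := ne_of_gt hij
    have hij' : i ≠ j := ne_of_lt hij
    have hUj : Function.update S i Letter.star j = S j := Function.update_of_ne hji' _ _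
    have c1a := c1_update S i Letter.star
    have c0a := c0_update S i Letter.star
    have csa := cs_update S i Letter.star
    rw [hiz.1] at c1a c0a csa
    simp only [reduceIte, reduceCtorEq, if_false, if_true] at c1a c0a csa
    have c1b := c1_update (Function.update S i Letter.star) j Letter.star
    have c0b := c0_update (Function.update S i Letter.star) j Letter.star
    have csb := cs_update (Function.update S i Letter.star) j Letter.star
    rw [hUj, hjo.1] at c1b c0b csb
    simp only [reduceIte, reduceCtorEq, if_false, if_true] at c1b c0b csb
    set U := Function.update S i Letter.star with hU
    set S' := Function.update U j Letter.star with hS'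
    have hc1' : count1 S' + 1 = k := by omega
    have hc0' : count0 S' + k + 1 = n := by omega
    have hcs' : countStar S' = 2 := by omega
    have hS'i : S' i = Letter.star := by
      rw [hS', Function.update_of_ne hij', hU, Function.update_self]
    have hS'j : S' j = Letter.star := Function.update_self _ _ _
    have hS'other : ∀ p, p ≠ i → p ≠ j → S' p = S p := by
      intro p hpi hpj
      rw [hS', Function.update_of_ne hpj, hU, Function.update_of_ne hpi]
    refine ⟨Or.inr ⟨by omega, by omega⟩, ⟨hc1', hc0', ?_, ?_⟩, ?_⟩
    · -- NoOneRight S'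
      refine ⟨⟨j, hS'j⟩, fun p hp => ?_⟩
      have hpj : p ≠ j := by intro h; rw [h, hS'j] at hp; exact absurd hp (by simp)
      have hpi : p ≠ i := by intro h; rw [h, hS'i] at hp; exact absurd hp (by simp)
      rw [hS'other p hpi hpj] at hp
      have hpltj : p < j := lt_of_le_of_ne (not_lt.mp fun h => hjo.2 p h hp) hpj
      exact ⟨j, hpltj, hS'j⟩
    · -- NoZeroLeft S'
      refine ⟨⟨j, hS'j⟩, fun p hp => ?_⟩
      have hpj : p ≠ j := by intro h; rw [h, hS'j] at hp; exact absurd hp (by simp)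
      have hpi : p ≠ i := by intro h; rw [h, hS'i] at hp; exact absurd hp (by simp)
      rw [hS'other p hpi hpj] at hp
      have hiltp : i < p := lt_of_le_of_ne (not_lt.mp fun h => hiz.2 p h hp) (Ne.symm hpi)
      exact ⟨i, hiltp, hS'i⟩
    · -- Apply10 S' S
      refine ⟨i, j, ⟨hS'i, fun p hpi => ?_⟩, ⟨hS'j, fun p hjp => ?_⟩, hij', ?_⟩
      · rw [hS'other p (ne_of_lt hpi) (ne_of_lt (hpi.trans hij))]
        exact hnostar p
      · rw [hS'other p (ne_of_gt (hij.trans hjp)) (ne_of_gt hjp)]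
        exact hnostar p
      · funext p
        by_cases hpj : p = j
        · subst hpj; rw [Function.update_self]; exact hjo.1
        · rw [Function.update_of_ne hpj]
          by_cases hpi : p = i
          · subst hpi; rw [Function.update_self]; exact hiz.1
          · rw [Function.update_of_ne hpi]
            exact (hS'other p hpi hpj).symm
  · rintro T T' hFT ⟨h1, h0, hnor, hnzl⟩ ⟨i, j, his, hjs, hij', rfl⟩
    have hsum := cnt_sum T
    have hstar2 : countStar T = 2 := by omega
    have hij : i < j := by
      rcases lt_trichotomy i j with h | h | h
      · exact h
      · exact absurd h hij'
      · exact absurd hjs.1 (his.2 j h)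
    have hji' : j ≠ i := ne_of_gt hij
    have hUj : Function.update T i Letter.zero j = T j := Function.update_of_ne hji' _ _
    have c1a := c1_update T i Letter.zero
    have c0a := c0_update T i Letter.zero
    have csa := cs_update T i Letter.zero
    rw [his.1] at c1a c0a csa
    simp only [reduceIte, reduceCtorEq, if_false, if_true] at c1a c0a csa
    have c1b := c1_update (Function.update T i Letter.zero) j Letter.one
    have c0b := c0_update (Function.update T i Letter.zero) j Letter.one
    have csb := cs_update (Function.update T i Letter.zero) j Letter.one
    rw [hUj, hjs.1] at c1b c0b csb
    simp only [reduceIte, reduceCtorEq, if_false, if_true] at c1b c0b csb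
    set U := Function.update T i Letter.zero with hU
    set T' := Function.update U j Letter.one with hT'
    have hc1' : count1 T' = k := by omega
    have hc0' : count0 T' + k = n := by omega
    have hcs' : countStar T' = 0 := by omega
    have hT'i : T' i = Letter.zero := by
      rw [hT', Function.update_of_ne hij', hU, Function.update_self]
    have hT'j : T' j = Letter.one := Function.update_self _ _ _
    have hT'other : ∀ p, p ≠ i → p ≠ j → T' p = T p := by
      intro p hpi hpj
      rw [hT', Function.update_of_ne hpj, hU, Function.update_of_ne hpi]
    have hne : T' ≠ v0seq n k := by
      intro h
      have hik : ¬ ((i : ℕ) < k) := by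
        intro hlt
        have := hT'i
        rw [h] at this
        simp [v0seq, hlt] at this
      have hjk : (j : ℕ) < k := by
        by_contra hlt
        have := hT'j
        rw [h] at this
        simp [v0seq, hlt] at this
      have : (i : ℕ) < (j : ℕ) := hij
      omega
    refine ⟨Or.inl ⟨hcs', hc1'⟩, ⟨hc1', hc0', hne⟩, ?_⟩
    refine ⟨i, j, ⟨hT'i, fun p hpi hp0 => ?_⟩, ⟨hT'j, fun p hjp hp1 => ?_⟩, ?_⟩
    · rw [hT'other p (ne_of_lt hpi) (ne_of_lt (hpi.trans hij))] at hp0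
      obtain ⟨q, hq, hqs⟩ := hnzl.2 p hp0
      exact his.2 q (hq.trans hpi) hqs
    · rw [hT'other p (ne_of_gt (hij.trans hjp)) (ne_of_gt hjp)] at hp1
      obtain ⟨q, hq, hqs⟩ := hnor.2 p hp1
      exact hjs.2 q (hjp.trans hq) hqs
    · funext p
      by_cases hpj : p = j
      · subst hpj; rw [Function.update_self]; exact hjs.1
      · rw [Function.update_of_ne hpj]
        by_cases hpi : p = i
        · subst hpi; rw [Function.update_self]; exact his.1
        · rw [Function.update_of_ne hpi]
          exact (hT'other p hpi hpj).symm
end
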